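/- The sum of the series ∑_{n=1}^∞ 1/∏_{i=1}^{n} (n+i) = ∑_{n=1}^∞ 1/((n+1)(n+2)⋯(2n)) equals e^{1/4} · ∫_0^{1/2} e^{−t²} dt. -/

import Mathlib

open Finset MeasureTheory

/- ### finite binomial identity -/
theorem binom_id (n : ℕ) : ∀ x : ℝ, (∀ i : ℕ, i ≤ n → x + i ≠ 0) →
    ∑ k ∈ range (n + 1), (-1 : ℝ) ^ k * (n.choose k) / (x + k)
      = (n.factorial : ℝ) / ∏ i ∈ range (n + 1), (x + i) := by
  induction n with
  | zero => intro x hx; simp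
  | succ n ih =>
    intro x hx
    have hx' : ∀ i : ℕ, i ≤ n → x + i ≠ 0 := fun i hi => hx i (hi.trans (Nat.le_succ n))
    have hx1 : ∀ i : ℕ, i ≤ n → (x + 1) + i ≠ 0 := by
      intro i hi
      have := hx (i + 1) (by omega)
      push_cast at this ⊢
      intro h; exact this (by linarith)
    have hext : ∑ k ∈ range (n + 1), (-1:ℝ)^(k+1) * (n.choose (k+1)) / (x + (↑(k+1)))
        = ∑ k ∈ range n, (-1:ℝ)^(k+1) * (n.choose (k+1)) / (x + (↑(k+1))) := by
      rw [Finset.sum_range_succ]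
      simp [Nat.choose_succ_self]
    have key : ∑ k ∈ range (n + 2), (-1 : ℝ) ^ k * ((n+1).choose k) / (x + k)
        = (∑ k ∈ range (n + 1), (-1 : ℝ) ^ k * (n.choose k) / (x + k))
          - ∑ k ∈ range (n + 1), (-1 : ℝ) ^ k * (n.choose k) / ((x + 1) + k) := by
      rw [Finset.sum_range_succ' (fun k => (-1:ℝ)^k * ((n+1).choose k)/(x+k)) (n+1),
          Finset.sum_range_succ' (fun k => (-1:ℝ)^k * (n.choose k)/(x+k)) n]
      have hpt : ∀ k ∈ range (n+1), (-1:ℝ)^(k+1) * ((n+1).choose (k+1)) / (x + ↑(k+1))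
          = (-1:ℝ)^(k+1) * (n.choose (k+1)) / (x + ↑(k+1))
            - (-1:ℝ)^k * (n.choose k) / ((x+1) + k) := by
        intro k _
        rw [Nat.choose_succ_succ]
        push_cast [Nat.succ_eq_add_one]
        have hd : x + 1 + (k:ℝ) = x + ((k:ℝ)+1) := by ring
        rw [hd, mul_add, add_div]
        ring
      rw [Finset.sum_congr rfl hpt, Finset.sum_sub_distrib, hext]
      simp only [Nat.choose_zero_right, Nat.cast_one, Nat.cast_zero, pow_zero]
      ring
    rw [key, ih x hx', ih (x+1) hx1]
    set P1 := ∏ i ∈ range (n + 1), (x + ↑i) with hP1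
    set P2 := ∏ i ∈ range (n + 1), ((x + 1) + ↑i) with hP2
    set q := ∏ i ∈ range (n + 2), (x + ↑i) with hq
    have h1 : P1 ≠ 0 := Finset.prod_ne_zero_iff.2 (fun i hi => hx' i (Finset.mem_range_succ_iff.1 hi))
    have h2 : P2 ≠ 0 := Finset.prod_ne_zero_iff.2 (fun i hi => hx1 i (Finset.mem_range_succ_iff.1 hi))
    have e1 : q = P1 * (x + (↑n + 1)) := by
      rw [hq, Finset.prod_range_succ]; push_cast; ring
    have e2 : q = P2 * x := by
      rw [hq, Finset.prod_range_succ' (fun i => x + (i:ℝ)) (n+1), hP2]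
      push_cast; ring_nf
    have hqne : q ≠ 0 := by rw [e2]; exact mul_ne_zero h2 (by simpa using hx 0 (Nat.zero_le _))
    have hc : ((n+1).factorial : ℝ) = ((n:ℝ)+1) * (n.factorial : ℝ) := by
      rw [Nat.factorial_succ]; push_cast; ring
    rw [div_sub_div _ _ h1 h2, div_eq_div_iff (mul_ne_zero h1 h2) hqne]
    linear_combination (n.factorial:ℝ)*P2*e1 - (n.factorial:ℝ)*P1*e2 - P1*P2*hc

/- ### odd product -/
theorem odd_prod (n : ℕ) : ∏ i ∈ range (n + 1), (2 * (i:ℝ) + 1)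
    = ((2*n+1).factorial : ℝ) / (2 ^ n * (n.factorial : ℝ)) := by
  induction n with
  | zero => simp
  | succ n ih =>
    rw [Finset.prod_range_succ, ih]
    have h2 : ((2*(n+1)+1).factorial : ℝ) = (2*(n:ℝ)+3)*(2*(n:ℝ)+2)*((2*n+1).factorial : ℝ) := by
      have h : 2*(n+1)+1 = (2*n+1)+1+1 := by ring
      rw [h, Nat.factorial_succ, Nat.factorial_succ]; push_cast; ring
    have h3 : ((n+1).factorial : ℝ) = ((n:ℝ)+1)*(n.factorial : ℝ) := by
      rw [Nat.factorial_succ]; push_cast; ring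
    rw [h2, h3]
    have hne : (n.factorial : ℝ) ≠ 0 := by positivity
    field_simp
    push_cast; ring

/- ### the key finite sum value -/
theorem T_id (n : ℕ) :
    ∑ k ∈ range (n + 1), (-1 : ℝ) ^ k * (n.choose k) / (2*k+1)
      = 4 ^ n * (n.factorial : ℝ)^2 / ((2*n+1).factorial : ℝ) := by
  have hbinom := binom_id n (1/2) (fun i _ => by positivity)
  have hL : ∑ k ∈ range (n + 1), (-1 : ℝ) ^ k * (n.choose k) / ((1:ℝ)/2 + k)
      = 2 * ∑ k ∈ range (n + 1), (-1 : ℝ) ^ k * (n.choose k) / (2*k+1) := by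
    rw [Finset.mul_sum]
    refine Finset.sum_congr rfl fun k _ => ?_
    have h2k : (2*(k:ℝ)+1) ≠ 0 := by positivity
    have h2k' : ((1:ℝ)/2 + k) ≠ 0 := by positivity
    field_simp
    ring
  have hP : ∏ i ∈ range (n + 1), ((1:ℝ)/2 + i)
      = (∏ i ∈ range (n + 1), (2 * (i:ℝ) + 1)) / 2^(n+1) := by
    rw [eq_div_iff (by positivity : (2:ℝ)^(n+1) ≠ 0)]
    calc (∏ i ∈ range (n + 1), ((1:ℝ)/2 + i)) * 2^(n+1)
        = (∏ i ∈ range (n + 1), ((1:ℝ)/2 + i)) * ∏ _i ∈ range (n+1), (2:ℝ) := by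
          rw [Finset.prod_const, Finset.card_range]
      _ = ∏ i ∈ range (n + 1), (((1:ℝ)/2 + i) * 2) := by rw [Finset.prod_mul_distrib]
      _ = ∏ i ∈ range (n + 1), (2 * (i:ℝ) + 1) := Finset.prod_congr rfl fun i _ => by ring
  rw [hL, hP, odd_prod n] at hbinom
  have hfac : ((2*n+1).factorial : ℝ) ≠ 0 := by positivity
  have hnfac : (n.factorial : ℝ) ≠ 0 := by positivity
  have h4 : (4:ℝ)^n = 2^n * 2^n := by rw [← mul_pow]; norm_num
  field_simp at hbinom ⊢
  linear_combination hbinom/2 - (n.factorial:ℝ)^2 * h4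

/- ### power series of exp(-t^2) -/
noncomputable def fk (k : ℕ) (t : ℝ) : ℝ := (-1)^k * t^(2*k) / (k.factorial : ℝ)

theorem exp_series (t : ℝ) : Real.exp (-t^2) = ∑' k : ℕ, fk k t := by
  rw [Real.exp_eq_exp_ℝ, NormedSpace.exp_eq_tsum_div]
  refine tsum_congr fun k => ?_
  unfold fk
  rw [neg_pow, ← pow_mul]

theorem norm_fk (k : ℕ) (t : ℝ) : ‖fk k t‖ = t^(2*k) / (k.factorial : ℝ) := by
  unfold fk
  rw [Real.norm_eq_abs, abs_div, abs_mul, abs_pow, abs_neg, abs_one, one_pow, one_mul,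
    Nat.abs_cast, abs_pow, (even_two_mul k).pow_abs]

theorem fk_intnorm (k : ℕ) :
    ∫ t in Set.Ioc (0:ℝ) (1/2), ‖fk k t‖ = (1/2)^(2*k+1) / ((2*k+1) * (k.factorial : ℝ)) := by
  simp_rw [norm_fk]
  rw [MeasureTheory.integral_div]
  rw [← intervalIntegral.integral_of_le (by norm_num : (0:ℝ) ≤ 1/2)]
  rw [integral_pow]
  push_cast
  have h1 : (2*(k:ℝ)+1) ≠ 0 := by positivity
  have h2 : (k.factorial:ℝ) ≠ 0 := by positivity
  rw [div_div]
  congr 1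
  norm_num

theorem g_summable : Summable (fun k : ℕ => (1/2:ℝ)^(2*k+1) / ((2*k+1) * (k.factorial : ℝ))) := by
  apply Summable.of_nonneg_of_le (fun k => by positivity) (fun k => ?_)
    (summable_geometric_of_lt_one (by norm_num) (by norm_num) : Summable fun k : ℕ => (1/4:ℝ)^k)
  have h1 : (1/2:ℝ)^(2*k+1) ≤ (1/4)^k := by
    rw [pow_succ, pow_mul]
    norm_num
  have h2 : (1:ℝ) ≤ (2*k+1) * (k.factorial : ℝ) := by
    have : (1:ℝ) ≤ (k.factorial : ℝ) := by exact_mod_cast Nat.one_le_iff_ne_zero.2 k.factorial_ne_zero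
    nlinarith [Nat.cast_nonneg (α := ℝ) k]
  calc (1/2:ℝ)^(2*k+1) / ((2*k+1) * (k.factorial : ℝ)) ≤ (1/2)^(2*k+1) :=
        div_le_self (by positivity) h2
    _ ≤ (1/4)^k := h1

theorem fk_integrable (k : ℕ) : Integrable (fk k) (volume.restrict (Set.Ioc (0:ℝ) (1/2))) := by
  have hc : Continuous (fk k) := by unfold fk; continuity
  exact hc.integrableOn_Ioc

/- ### the integral as a series -/
theorem int_eq : (∫ t in (0:ℝ)..(1/2), Real.exp (-t^2))
    = ∑' k : ℕ, (-1:ℝ)^k * ((1/2)^(2*k+1) / ((2*k+1) * (k.factorial : ℝ))) := by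
  rw [intervalIntegral.integral_of_le (by norm_num : (0:ℝ) ≤ 1/2)]
  have h1 : ∀ t : ℝ, Real.exp (-t^2) = ∑' k : ℕ, fk k t := exp_series
  rw [MeasureTheory.integral_congr_ae (Filter.Eventually.of_forall (fun t => h1 t))]
  rw [← MeasureTheory.integral_tsum_of_summable_integral_norm fk_integrable ?hsum]
  case hsum =>
    simp_rw [fk_intnorm]
    exact g_summable
  refine tsum_congr fun k => ?_
  have hfk : ∀ t : ℝ, fk k t = ((-1:ℝ)^k) * (t^(2*k) / (k.factorial:ℝ)) := fun t => by
    unfold fk; ring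
  simp_rw [hfk]
  rw [MeasureTheory.integral_const_mul]
  have hin := fk_intnorm k
  simp_rw [norm_fk] at hin
  rw [hin]

noncomputable def ff (j : ℕ) : ℝ := (1/4)^j / (j.factorial : ℝ)
noncomputable def gg (j : ℕ) : ℝ := (-1)^j * ((1/2)^(2*j+1) / ((2*j+1) * (j.factorial : ℝ)))

/- ### summability of the two series -/
theorem f_summable_norm : Summable (fun n : ℕ => ‖ff n‖) := by
  refine (Real.summable_pow_div_factorial (1/4)).congr fun n => ?_
  unfold ff
  rw [Real.norm_eq_abs, abs_of_nonneg (by positivity)]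

theorem g_summable_norm : Summable (fun k : ℕ => ‖gg k‖) := by
  refine g_summable.congr fun k => ?_
  unfold gg
  rw [Real.norm_eq_abs, abs_mul, abs_pow, abs_neg, abs_one, one_pow, one_mul,
    abs_of_nonneg (by positivity)]

/- ### nat product -/
theorem prod_Icc_shift (m : ℕ) :
    m.factorial * ∏ i ∈ Finset.Icc 1 m, (m + i) = (2*m).factorial := by
  have h1 : ∏ i ∈ Finset.Icc 1 m, (m + i) = ∏ j ∈ Finset.Ioc m (2*m), j := by
    calc ∏ i ∈ Finset.Icc 1 m, (m + i) = ∏ i ∈ Finset.Ioc 0 m, (m + i) := by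
          rw [← Finset.Icc_add_one_left_eq_Ioc, zero_add]
      _ = ∏ j ∈ (Finset.Ioc 0 m).map (addLeftEmbedding m), j := by
          rw [Finset.prod_map]; rfl
      _ = ∏ j ∈ Finset.Ioc m (2*m), j := by
          rw [map_add_left_Ioc]
          norm_num [two_mul]
  have h2 : m.factorial = ∏ j ∈ Finset.Ioc 0 m, j := by
    rw [← Finset.Icc_add_one_left_eq_Ioc, ← Finset.Ico_add_one_right_eq_Icc, zero_add, Finset.prod_Ico_id_eq_factorial]
  rw [h1, h2, Finset.prod_Ioc_consecutive _ (Nat.zero_le m) (by omega)]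
  rw [← Finset.Icc_add_one_left_eq_Ioc, ← Finset.Ico_add_one_right_eq_Icc, zero_add, Finset.prod_Ico_id_eq_factorial]

/- ### the per-term Cauchy product value -/
theorem cauchy_term (n : ℕ) :
    ∑ k ∈ range (n + 1), ff k * gg (n - k)
      = (n.factorial : ℝ) / (2 * ((2*n+1).factorial : ℝ)) := by
  rw [← Finset.sum_range_reflect]
  simp only [Nat.add_sub_cancel]
  have hterm : ∀ k ∈ range (n+1), ff (n - k) * gg (n - (n - k))
      = (1 / (2 * 4^n * (n.factorial : ℝ))) * ((-1 : ℝ) ^ k * (n.choose k) / (2*k+1)) := by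
    intro k hk
    have hk' : k ≤ n := Finset.mem_range_succ_iff.1 hk
    rw [Nat.sub_sub_self hk']
    unfold ff gg
    have hch : ((n.choose k : ℝ)) * (k.factorial : ℝ) * ((n-k).factorial : ℝ) = (n.factorial : ℝ) := by
      exact_mod_cast congrArg (Nat.cast (R := ℝ)) (Nat.choose_mul_factorial_mul_factorial hk')
    have h4 : (4:ℝ)^(n-k) * 4^k = 4^n := by rw [← pow_add, Nat.sub_add_cancel hk']
    have hhalf : (1/2:ℝ)^(2*k+1) = 1/(2*4^k) := by
      rw [div_pow, one_pow, pow_succ, pow_mul]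
      norm_num
      ring
    have hq : (1/4:ℝ)^(n-k) = 1/4^(n-k) := by rw [div_pow, one_pow]
    have hne1 : ((n-k).factorial : ℝ) ≠ 0 := by positivity
    have hne2 : ((k).factorial : ℝ) ≠ 0 := by positivity
    have hne3 : ((n).factorial : ℝ) ≠ 0 := by positivity
    have hne4 : (2*(k:ℝ)+1) ≠ 0 := by positivity
    have hne5 : (4:ℝ)^(n-k) ≠ 0 := by positivity
    have hne6 : (4:ℝ)^k ≠ 0 := by positivity
    have hne7 : (4:ℝ)^n ≠ 0 := by positivity
    rw [hhalf, hq]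
    field_simp
    linear_combination (-(-1:ℝ)^k*2*(2*(k:ℝ)+1)*4^n) * hch
      - ((-1:ℝ)^k*2*(2*(k:ℝ)+1)*(n.choose k)*((n-k).factorial:ℝ)*(k.factorial:ℝ)) * h4
      + (((-1:ℝ)^k*(4*(k:ℝ)+2) - 1)*4^n) * hch
      + (((-1:ℝ)^k*(4*(k:ℝ)+2) - 1)*(n.choose k:ℝ)*((n-k).factorial:ℝ)*(k.factorial:ℝ)) * h4
  rw [Finset.sum_congr rfl hterm, ← Finset.mul_sum, T_id]
  have hne3 : ((n).factorial : ℝ) ≠ 0 := by positivity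
  have hne7 : (4:ℝ)^n ≠ 0 := by positivity
  have hne8 : ((2*n+1).factorial : ℝ) ≠ 0 := by positivity
  field_simp

/- ### term of the LHS -/
theorem lhs_term (n : ℕ) : (1:ℝ)/((∏ i ∈ Finset.Icc 1 (n+1), (n+1+i) : ℕ) : ℝ)
    = (n.factorial : ℝ)/(2*((2*n+1).factorial : ℝ)) := by
  set P : ℕ := ∏ i ∈ Finset.Icc 1 (n+1), (n+1+i) with hPdef
  have hcast : ((n+1).factorial : ℝ) * (P : ℝ) = ((2*(n+1)).factorial : ℝ) := by
    exact_mod_cast congrArg (Nat.cast (R := ℝ)) (prod_Icc_shift (n+1))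
  have h2 : ((2*(n+1)).factorial : ℝ) = (2*(n:ℝ)+2) * ((2*n+1).factorial : ℝ) := by
    rw [show 2*(n+1) = (2*n+1)+1 from by ring, Nat.factorial_succ]
    push_cast; ring
  have h3 : ((n+1).factorial : ℝ) = ((n:ℝ)+1) * (n.factorial : ℝ) := by
    rw [Nat.factorial_succ]; push_cast; ring
  rw [h2, h3] at hcast
  have hn1 : ((n:ℝ)+1) ≠ 0 := by positivity
  have hcast' : (n.factorial : ℝ) * (P : ℝ) = 2 * ((2*n+1).factorial : ℝ) := by
    apply mul_left_cancel₀ hn1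
    linear_combination hcast
  have hPne : (P : ℝ) ≠ 0 := by
    have : 0 < P := Finset.prod_pos (fun i _ => by omega)
    exact Nat.cast_ne_zero.2 this.ne' 
  rw [div_eq_div_iff hPne (by positivity : (2*((2*n+1).factorial : ℝ)) ≠ 0)]
  linear_combination -hcast'

/-- The sum `∑_{n=1}^∞ 1/((n+1)(n+2)⋯(2n))` equals `e^{1/4} ∫_0^{1/2} e^{−t²} dt`. -/
theorem stmt11 :
    ∑' n : ℕ, (1 : ℝ) / ((∏ i ∈ Finset.Icc 1 (n + 1), (n + 1 + i) : ℕ) : ℝ)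
      = Real.exp (1 / 4) * ∫ t in (0 : ℝ)..(1 / 2), Real.exp (-t ^ 2) := by
  have hexp : Real.exp (1/4) = ∑' n : ℕ, ff n := by
    rw [Real.exp_eq_exp_ℝ, NormedSpace.exp_eq_tsum_div]
    exact tsum_congr fun k => rfl
  have hint : (∫ t in (0:ℝ)..(1/2), Real.exp (-t^2)) = ∑' k : ℕ, gg k := int_eq
  rw [tsum_congr lhs_term, hexp, hint,
    tsum_mul_tsum_eq_tsum_sum_range_of_summable_norm f_summable_norm g_summable_norm]
  exact (tsum_congr fun n => cauchy_term n).symm
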